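/- Let b ∈ (0,1) and m ≥ 1 an integer with TᵐS(b) = m − 1/b = 0, i.e. b = 1/m. Then the value 0 is reached by both sides of the b-cycle: on the lower side, S(b) = −m, T^{m−1}(−m) = −1, T(−1) = 0; on the upper side, T^{−1}(b) = b−1, S(b−1) = −1/(b−1) = m/(m−1) when m ≥ 2, and after applying T^{−1}(ST^{−2})^{m−2} one reaches 1, then T^{−1}(1) = 0. Moreover the product of the transformations over this cycle is not the identity in PSL(2,ℤ) (weak cycle). -/

import Mathlib

open ModularGroup

/-- The Möbius transformation `S T⁻² : x ↦ -1/(x-2)`. -/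
noncomputable def gStep (x : ℝ) : ℝ := -1 / (x - 2)

lemma gStep_iter (k : ℕ) : gStep^[k] (((k : ℝ) + 2) / ((k : ℝ) + 1)) = 2 := by
  induction k with
  | zero => norm_num [gStep]
  | succ k ih =>
    have h1 : ((k : ℝ) + 1) ≠ 0 := by positivity
    have h2 : ((k : ℝ) + 2) ≠ 0 := by positivity
    have : gStep (((k : ℝ) + 1 + 2) / ((k : ℝ) + 1 + 1)) = ((k : ℝ) + 2) / ((k : ℝ) + 1) := by
      unfold gStep
      rw [div_eq_div_iff]
      · field_simp
        ring
      · intro h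
        apply h1
        field_simp at h
        linarith
      · exact h1
    rw [Function.iterate_succ_apply]
    push_cast
    rw [this, ih]

lemma pow_coe (k : ℕ) :
    (((S * T⁻¹ * T⁻¹) ^ k : Matrix.SpecialLinearGroup (Fin 2) ℤ) : Matrix (Fin 2) (Fin 2) ℤ)
      = (-1 : ℤ) ^ k • !![1 - (k : ℤ), (k : ℤ); -(k : ℤ), 1 + (k : ℤ)] := by
  induction k with
  | zero => simp [Matrix.one_fin_two]
  | succ k ih =>
    rw [pow_succ, Matrix.SpecialLinearGroup.coe_mul, ih, Matrix.SpecialLinearGroup.coe_mul,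
      Matrix.SpecialLinearGroup.coe_mul, coe_S, coe_T_inv]
    push_cast
    ext i j
    fin_cases i <;> fin_cases j <;>
      simp [Matrix.mul_apply, Fin.sum_univ_two, Matrix.smul_apply] <;> ring

theorem weak_cycle_b_eq_one_div_m (m : ℕ) (hm : 2 ≤ m) (b : ℝ)
    (hb : b = 1 / (m : ℝ)) :
    -- lower side: S(b) = -m, then T^{m-1} gives -1, then T gives 0
    (-1 / b = -(m : ℝ)) ∧
    (-(m : ℝ) + ((m : ℝ) - 1) = -1) ∧
    ((-1 : ℝ) + 1 = 0) ∧
    -- upper side: S(b-1) = m/(m-1), then T⁻¹(ST⁻²)^{m-2} reaches 1, then T⁻¹ gives 0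
    (-1 / (b - 1) = (m : ℝ) / ((m : ℝ) - 1)) ∧
    (gStep^[m - 2] ((m : ℝ) / ((m : ℝ) - 1)) - 1 = 1) ∧
    ((1 : ℝ) - 1 = 0) ∧
    -- the product over the cycle is not the identity in PSL(2,ℤ) (weak cycle)
    (((T * (T⁻¹ * (S * T⁻¹ * T⁻¹) ^ (m - 2) * S)⁻¹ * (T ^ m * S) :
        Matrix.SpecialLinearGroup (Fin 2) ℤ) : Matrix (Fin 2) (Fin 2) ℤ) ≠ 1 ∧
      ((T * (T⁻¹ * (S * T⁻¹ * T⁻¹) ^ (m - 2) * S)⁻¹ * (T ^ m * S) :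
        Matrix.SpecialLinearGroup (Fin 2) ℤ) : Matrix (Fin 2) (Fin 2) ℤ) ≠ -1) := by
  obtain ⟨k, rfl⟩ := Nat.exists_eq_add_of_le hm
  have hmR : ((2 + k : ℕ) : ℝ) = (k : ℝ) + 2 := by push_cast; ring
  have hk1 : ((k : ℝ) + 1) ≠ 0 := by positivity
  have hk2 : ((k : ℝ) + 2) ≠ 0 := by positivity
  have hsub : 2 + k - 2 = k := by omega
  refine ⟨?_, by ring, by ring, ?_, ?_, by ring, ?_, ?_⟩
  · rw [hb, hmR]; field_simp
  · rw [hb, hmR]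
    have hlt : 1 / ((k : ℝ) + 2) < 1 := by
      rw [div_lt_one (by positivity)]; linarith
    rw [div_eq_div_iff (by linarith) (by intro h; apply hk1; linarith)]
    field_simp
    ring
  · rw [hmR, hsub, show ((k : ℝ) + 2 - 1) = (k : ℝ) + 1 by ring, gStep_iter]
    norm_num
  all_goals {
    intro h
    have h01 := congrFun (congrFun h 0) 1
    rw [hsub] at h01
    rw [Matrix.SpecialLinearGroup.coe_mul, Matrix.SpecialLinearGroup.coe_mul,
      Matrix.SpecialLinearGroup.coe_inv, Matrix.SpecialLinearGroup.coe_mul,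
      Matrix.SpecialLinearGroup.coe_mul, pow_coe, Matrix.SpecialLinearGroup.coe_mul,
      coe_S, coe_T, coe_T_inv] at h01
    have hT : ((T ^ (2 + k) : Matrix.SpecialLinearGroup (Fin 2) ℤ) : Matrix (Fin 2) (Fin 2) ℤ)
        = !![1, (2 + k : ℤ); 0, 1] := by
      rw [← zpow_natCast, coe_T_zpow]; push_cast; ring_nf
    rw [hT] at h01
    have hinner : (!![1, -1; 0, 1] * (-1 : ℤ) ^ k • !![1 - (k : ℤ), (k : ℤ); -(k : ℤ), 1 + (k : ℤ)]
        * !![0, -1; 1, 0]) = (-1 : ℤ) ^ k • !![-1, -1; (k : ℤ) + 1, (k : ℤ)] := by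
      ext i j
      fin_cases i <;> fin_cases j <;>
        simp [Matrix.mul_apply, Fin.sum_univ_two, Matrix.smul_apply] <;> ring
    rw [hinner, Matrix.adjugate_smul, Matrix.adjugate_fin_two] at h01
    simp only [Matrix.mul_apply, Fin.sum_univ_two, Matrix.smul_apply, Matrix.one_apply,
      Matrix.neg_apply, Matrix.of_apply, Matrix.cons_val', Matrix.cons_val_zero,
      Matrix.cons_val_one, Matrix.head_cons, Matrix.head_fin_const, Matrix.empty_val',
      Matrix.cons_val_fin_one] at h01
    rcases Nat.even_or_odd k with hp | hp
    · rw [hp.neg_one_pow] at h01; norm_num at h01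
    · rw [hp.neg_one_pow] at h01; norm_num at h01
  }
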